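/- Let γ > 0 and N be the solution operator of v'' − γv − v³ + w = 0 on (0,∞) with Neumann condition at 0 and decay at infinity. If w₁, w₂ ∈ H^1(0,∞) are distinct with w₁ ≥ w₂ pointwise, then Nw₁ > Nw₂ pointwise on [0,∞). -/

import Mathlib

open MeasureTheory Set Filter

private lemma monoOn_of_hasDerivAt {f f' : ℝ → ℝ} {s : Set ℝ} (hs : Convex ℝ s)
    (hf : ∀ x ∈ s, HasDerivAt f (f' x) x) (h : ∀ x ∈ interior s, 0 ≤ f' x) :
    MonotoneOn f s :=
  monotoneOn_of_deriv_nonneg hs (fun x hx => (hf x hx).continuousAt.continuousWithinAt)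
    (fun x hx => ((hf x (interior_subset hx)).differentiableAt).differentiableWithinAt)
    (fun x hx => by rw [(hf x (interior_subset hx)).deriv]; exact h x hx)

private lemma antiOn_of_hasDerivAt {f f' : ℝ → ℝ} {s : Set ℝ} (hs : Convex ℝ s)
    (hf : ∀ x ∈ s, HasDerivAt f (f' x) x) (h : ∀ x ∈ interior s, f' x ≤ 0) :
    AntitoneOn f s :=
  antitoneOn_of_deriv_nonpos hs (fun x hx => (hf x hx).continuousAt.continuousWithinAt)
    (fun x hx => ((hf x (interior_subset hx)).differentiableAt).differentiableWithinAt)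
    (fun x hx => by rw [(hf x (interior_subset hx)).deriv]; exact h x hx)

private lemma expMulDeriv {g : ℝ → ℝ} {d μ t : ℝ} (hg : HasDerivAt g d t) :
    HasDerivAt (fun s => Real.exp (μ * s) * g s) (Real.exp (μ * t) * (d + μ * g t)) t := by
  have he : HasDerivAt (fun s : ℝ => Real.exp (μ * s)) (Real.exp (μ * t) * μ) t := by
    simpa [Function.comp_def] using (Real.hasDerivAt_exp (μ * t)).comp t ((hasDerivAt_id t).const_mul μ)
  have := (he.mul hg : HasDerivAt (fun s => Real.exp (μ * s) * g s) _ t)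
  refine this.congr_deriv ?_
  ring

private lemma bdd_aux {f : ℝ → ℝ} (hc : ∀ x ∈ Ici (0:ℝ), ContinuousAt f x)
    (ht : Tendsto f atTop (nhds 0)) : ∃ K, ∀ t ∈ Ici (0:ℝ), |f t| ≤ K := by
  obtain ⟨R, hR⟩ := Metric.tendsto_atTop.mp ht 1 one_pos
  obtain ⟨K, hK⟩ := (isCompact_Icc (a := (0:ℝ)) (b := max R 0)).exists_bound_of_continuousOn
      (fun t htt => (hc t (Set.mem_Ici.mpr htt.1)).continuousWithinAt)
  refine ⟨max K 1, fun t htt => ?_⟩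
  rcases le_total t (max R 0) with h | h
  · exact le_trans (le_of_eq (Real.norm_eq_abs _).symm) (le_trans (hK t ⟨htt, h⟩) (le_max_left _ _))
  · have h2 := hR t (le_trans (le_max_left R 0) h)
    rw [Real.dist_eq, sub_zero] at h2
    exact le_trans h2.le (le_max_right _ _)

private lemma nonneg_aux {u u' u'' : ℝ → ℝ}
    (hd1 : ∀ x ∈ Ici (0:ℝ), HasDerivAt u (u' x) x)
    (hd2 : ∀ x ∈ Ici (0:ℝ), HasDerivAt u' (u'' x) x)
    (hpos : ∀ x ∈ Ici (0:ℝ), 0 ≤ u x → 0 ≤ u'' x)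
    (hN : u' 0 = 0)
    (htend : Tendsto u atTop (nhds 0)) :
    ∀ x ∈ Ici (0:ℝ), u x ≤ 0 := by
  by_contra h
  push_neg at h
  obtain ⟨x₀, hx₀, hux₀⟩ := h
  have hx₀0 : (0:ℝ) ≤ x₀ := hx₀
  obtain ⟨ξ, hξ0, hξx₀, hu'ξ, hupos⟩ :
      ∃ ξ, 0 ≤ ξ ∧ ξ ≤ x₀ ∧ 0 ≤ u' ξ ∧ ∀ t ∈ Icc ξ x₀, 0 < u t := by
    by_cases hA : ∀ t ∈ Icc (0:ℝ) x₀, 0 < u t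
    · exact ⟨0, le_refl 0, hx₀0, hN.ge, hA⟩
    · push_neg at hA
      set A : Set ℝ := Icc (0:ℝ) x₀ ∩ u ⁻¹' (Iic 0) with hAdef
      have hAne : A.Nonempty := by
        obtain ⟨t, ht1, ht2⟩ := hA
        exact ⟨t, ht1, Set.mem_preimage.mpr (Set.mem_Iic.mpr ht2)⟩
      have hAclosed : IsClosed A :=
        ContinuousOn.preimage_isClosed_of_isClosed
          (fun t ht => (hd1 t (Set.mem_Ici.mpr ht.1)).continuousAt.continuousWithinAt)
          isClosed_Icc isClosed_Iic
      have hAbdd : BddAbove A := ⟨x₀, fun t ht => ht.1.2⟩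
      have ha : sSup A ∈ A := hAclosed.csSup_mem hAne hAbdd
      set a := sSup A with hadef
      have ha0 : (0:ℝ) ≤ a := ha.1.1
      have hua : u a ≤ 0 := ha.2
      have hax₀ : a < x₀ := lt_of_le_of_ne ha.1.2 (fun hh => by rw [hh] at hua; linarith)
      have hmid : ∀ t, a < t → t ≤ x₀ → 0 < u t := by
        intro t h1 h2
        by_contra hc
        push_neg at hc
        have htA : t ∈ A := ⟨⟨le_trans ha0 h1.le, h2⟩, hc⟩
        exact absurd (le_csSup hAbdd htA) (not_le.mpr h1)
      obtain ⟨ξ, hξmem, hξeq⟩ := exists_hasDerivAt_eq_slope u u' hax₀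
        (fun t ht => (hd1 t (Set.mem_Ici.mpr (le_trans ha0 ht.1))).continuousAt.continuousWithinAt)
        (fun t ht => hd1 t (Set.mem_Ici.mpr (le_trans ha0 ht.1.le)))
      refine ⟨ξ, le_trans ha0 hξmem.1.le, hξmem.2.le, ?_,
        fun t ht => hmid t (lt_of_lt_of_le hξmem.1 ht.1) ht.2⟩
      rw [hξeq]
      exact le_of_lt (div_pos (by linarith) (by linarith))
  have hIci : Ici ξ ⊆ Ici (0:ℝ) := Ici_subset_Ici.mpr hξ0
  have hall : ∀ t ∈ Ici ξ, 0 ≤ u t := by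
    by_contra hB
    push_neg at hB
    obtain ⟨t₀, ht₀ξ, ht₀⟩ := hB
    have ht₀ξ' : ξ ≤ t₀ := ht₀ξ
    have ht₀x : x₀ < t₀ := by
      by_contra hc
      push_neg at hc
      exact absurd (hupos t₀ ⟨ht₀ξ', hc⟩) (not_lt.mpr ht₀.le)
    set B : Set ℝ := Ici x₀ ∩ u ⁻¹' (Iic 0) with hBdef
    have hBne : B.Nonempty := ⟨t₀, Set.mem_Ici.mpr ht₀x.le, Set.mem_Iic.mpr ht₀.le⟩
    have hBclosed : IsClosed B :=
      ContinuousOn.preimage_isClosed_of_isClosed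
        (fun t ht => (hd1 t (Set.mem_Ici.mpr (le_trans hx₀0 ht))).continuousAt.continuousWithinAt)
        isClosed_Ici isClosed_Iic
    have hb := hBclosed.csInf_mem hBne ⟨x₀, fun t ht => ht.1⟩
    set b := sInf B with hbdef
    have hbx₀ : x₀ ≤ b := hb.1
    have hξb : ξ ≤ b := le_trans hξx₀ hbx₀
    have hnn : ∀ t ∈ Ico ξ b, 0 ≤ u t := by
      intro t ht
      rcases le_or_gt t x₀ with h | h
      · exact (hupos t ⟨ht.1, h⟩).le
      · by_contra hc
        push_neg at hc
        have : t ∈ B := ⟨Set.mem_Ici.mpr h.le, Set.mem_Iic.mpr hc.le⟩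
        exact absurd (csInf_le ⟨x₀, fun s hs => hs.1⟩ this) (not_le.mpr ht.2)
    have hmem : ∀ t ∈ Icc ξ b, t ∈ Ici (0:ℝ) := fun t ht => Set.mem_Ici.mpr (le_trans hξ0 ht.1)
    have hmono' : MonotoneOn u' (Icc ξ b) :=
      monoOn_of_hasDerivAt (convex_Icc _ _) (fun t ht => hd2 t (hmem t ht))
        (fun t ht => by
          rw [interior_Icc] at ht
          exact hpos t (Set.mem_Ici.mpr (le_trans hξ0 ht.1.le)) (hnn t ⟨ht.1.le, ht.2⟩))
    have hmonu : MonotoneOn u (Icc ξ b) :=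
      monoOn_of_hasDerivAt (convex_Icc _ _) (fun t ht => hd1 t (hmem t ht))
        (fun t ht => by
          rw [interior_Icc] at ht
          exact le_trans hu'ξ (hmono' ⟨le_refl ξ, hξb⟩ ⟨ht.1.le, ht.2.le⟩ ht.1.le))
    have hub : u x₀ ≤ u b := hmonu ⟨hξx₀, hbx₀⟩ ⟨hξb, le_refl b⟩ hbx₀
    have : u b ≤ 0 := hb.2
    linarith
  have hmono' : MonotoneOn u' (Ici ξ) :=
    monoOn_of_hasDerivAt (convex_Ici _) (fun t ht => hd2 t (hIci ht))
      (fun t ht => by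
        rw [interior_Ici] at ht
        exact hpos t (hIci (Set.mem_Ici.mpr (le_of_lt ht))) (hall t (Set.mem_Ici.mpr (le_of_lt ht))))
  have hmonu : MonotoneOn u (Ici ξ) :=
    monoOn_of_hasDerivAt (convex_Ici _) (fun t ht => hd1 t (hIci ht))
      (fun t ht => by
        rw [interior_Ici] at ht
        exact le_trans hu'ξ (hmono' (Set.self_mem_Ici) (Set.mem_Ici.mpr ht.le) ht.le))
  obtain ⟨T, hT⟩ := Metric.tendsto_atTop.mp htend (u x₀) hux₀
  have h1 : u x₀ ≤ u (max T x₀) :=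
    hmonu (Set.mem_Ici.mpr hξx₀) (Set.mem_Ici.mpr (le_trans hξx₀ (le_max_right _ _)))
      (le_max_right _ _)
  have h2 := hT (max T x₀) (le_max_left _ _)
  rw [Real.dist_eq, sub_zero] at h2
  have h3 := abs_lt.mp h2
  linarith [h3.2]

/-- `IsSol γ w v v' v''` : `v` solves `v'' − γv − v³ + w = 0` on `[0,∞)` with Neumann
condition at `0` and decay at infinity, with `v` and `v'` in `L²(0,∞)`. -/
def IsSol (γ : ℝ) (w v v' v'' : ℝ → ℝ) : Prop :=
  (∀ x ∈ Ici (0:ℝ), HasDerivAt v (v' x) x) ∧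
  (∀ x ∈ Ici (0:ℝ), HasDerivAt v' (v'' x) x) ∧
  (∀ x ∈ Ici (0:ℝ), v'' x - γ * v x - v x ^ 3 + w x = 0) ∧
  v' 0 = 0 ∧ Tendsto v atTop (nhds 0) ∧
  MemLp v 2 (volume.restrict (Ioi (0:ℝ))) ∧
  MemLp v' 2 (volume.restrict (Ioi (0:ℝ)))

/-- If `w₁ ≥ w₂` are distinct elements of `H¹(0,∞)`, then
`Nw₁ > Nw₂` pointwise on `[0,∞)`. -/
theorem statement6
    (γ : ℝ) (hγ : 0 < γ) (w₁ w₂ v₁ v₁' v₁'' v₂ v₂' v₂'' : ℝ → ℝ)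
    (hw₁ : MemLp w₁ 2 (volume.restrict (Ioi (0:ℝ))))
    (hw₂ : MemLp w₂ 2 (volume.restrict (Ioi (0:ℝ))))
    (hsol₁ : IsSol γ w₁ v₁ v₁' v₁'')
    (hsol₂ : IsSol γ w₂ v₂ v₂' v₂'')
    (hge : ∀ x ∈ Ici (0:ℝ), w₂ x ≤ w₁ x)
    (hdistinct : ¬ (w₁ =ᵐ[volume.restrict (Ioi (0:ℝ))] w₂)) :
    ∀ x ∈ Ici (0:ℝ), v₂ x < v₁ x := by
  obtain ⟨hd₁, hd₁', hode₁, hN₁, htend₁, -, -⟩ := hsol₁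
  obtain ⟨hd₂, hd₂', hode₂, hN₂, htend₂, -, -⟩ := hsol₂
  have hq : ∀ t : ℝ, 0 ≤ v₁ t ^ 2 + v₁ t * v₂ t + v₂ t ^ 2 := fun t => by
    nlinarith [sq_nonneg (v₁ t + v₂ t), sq_nonneg (v₁ t - v₂ t)]
  -- Step 1: v₂ - v₁ ≤ 0 on [0, ∞)
  have hz : ∀ t ∈ Ici (0:ℝ), v₂ t - v₁ t ≤ 0 := by
    apply nonneg_aux (u' := fun t => v₂' t - v₁' t) (u'' := fun t => v₂'' t - v₁'' t)
    · exact fun t ht => (hd₂ t ht).sub (hd₁ t ht)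
    · exact fun t ht => (hd₂' t ht).sub (hd₁' t ht)
    · intro t ht hu
      have e₁ := hode₁ t ht
      have e₂ := hode₂ t ht
      have hg := hge t ht
      nlinarith [mul_nonneg hu (hq t), mul_nonneg hγ.le hu]
    · simp [hN₁, hN₂]
    · simpa using htend₂.sub htend₁
  intro x hx
  have hle : v₂ x ≤ v₁ x := by linarith [hz x hx]
  rcases lt_or_eq_of_le hle with hlt | heq
  · exact hlt
  exfalso
  have hzx : v₁ x - v₂ x = 0 := by linarith
  -- global bounds
  obtain ⟨K₁, hK₁⟩ := bdd_aux (fun t ht => (hd₁ t ht).continuousAt) htend₁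
  obtain ⟨K₂, hK₂⟩ := bdd_aux (fun t ht => (hd₂ t ht).continuousAt) htend₂
  have hK₁0 : 0 ≤ K₁ := le_trans (abs_nonneg _) (hK₁ 0 Set.self_mem_Ici)
  have hK₂0 : 0 ≤ K₂ := le_trans (abs_nonneg _) (hK₂ 0 Set.self_mem_Ici)
  obtain ⟨μ, hμ1, hkey⟩ :
      ∃ μ : ℝ, 1 ≤ μ ∧ ∀ t ∈ Ici (0:ℝ), v₁'' t - v₂'' t ≤ μ ^ 2 * (v₁ t - v₂ t) := by
    have hμ1 : 1 ≤ 1 + γ + 2 * (K₁ ^ 2 + K₂ ^ 2) := by nlinarith [sq_nonneg K₁, sq_nonneg K₂]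
    refine ⟨1 + γ + 2 * (K₁ ^ 2 + K₂ ^ 2), hμ1, ?_⟩
    intro t ht
    have e₁ := hode₁ t ht
    have e₂ := hode₂ t ht
    have hzt : 0 ≤ v₁ t - v₂ t := by linarith [hz t ht]
    have hb₁ := abs_le.mp (hK₁ t ht)
    have hb₂ := abs_le.mp (hK₂ t ht)
    have hs₁ : v₁ t ^ 2 ≤ K₁ ^ 2 := by nlinarith [hb₁.1, hb₁.2]
    have hs₂ : v₂ t ^ 2 ≤ K₂ ^ 2 := by nlinarith [hb₂.1, hb₂.2]
    have hqb : γ + (v₁ t ^ 2 + v₁ t * v₂ t + v₂ t ^ 2)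
        ≤ (1 + γ + 2 * (K₁ ^ 2 + K₂ ^ 2)) ^ 2 := by
      nlinarith [sq_nonneg (v₁ t - v₂ t), sq_nonneg (v₁ t + v₂ t),
        mul_nonneg (le_trans zero_le_one hμ1)
          (by linarith : (0:ℝ) ≤ 1 + γ + 2 * (K₁ ^ 2 + K₂ ^ 2) - 1)]
    have hg := hge t ht
    nlinarith [mul_le_mul_of_nonneg_right hqb hzt]
  -- z'(x) = 0
  have hz'x : v₁' x - v₂' x = 0 := by
    rcases eq_or_lt_of_le (Set.mem_Ici.mp hx) with h0 | h0
    · rw [← h0]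
      simp [hN₁, hN₂]
    · have hmin : IsLocalMin (fun t => v₁ t - v₂ t) x := by
        refine Filter.eventually_of_mem (isOpen_Ioi.mem_nhds h0) (fun t ht => ?_)
        have := hz t (Set.mem_Ici.mpr (le_of_lt ht))
        show v₁ x - v₂ x ≤ v₁ t - v₂ t
        linarith
      exact hmin.hasDerivAt_eq_zero ((hd₁ x hx).sub (hd₂ x hx))
  have hx0 : (0:ℝ) ≤ x := hx
  -- derivatives of z' ∓ μ z
  have hz'd : ∀ t ∈ Ici (0:ℝ),
      HasDerivAt (fun s => (v₁' s - v₂' s) - μ * (v₁ s - v₂ s))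
        ((v₁'' t - v₂'' t) - μ * (v₁' t - v₂' t)) t :=
    fun t ht => ((hd₁' t ht).sub (hd₂' t ht)).sub (((hd₁ t ht).sub (hd₂ t ht)).const_mul μ)
  have hz'd2 : ∀ t ∈ Ici (0:ℝ),
      HasDerivAt (fun s => (v₁' s - v₂' s) + μ * (v₁ s - v₂ s))
        ((v₁'' t - v₂'' t) + μ * (v₁' t - v₂' t)) t :=
    fun t ht => ((hd₁' t ht).sub (hd₂' t ht)).add (((hd₁ t ht).sub (hd₂ t ht)).const_mul μ)
  -- forward: z ≤ 0 on [x, ∞)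
  have hfw : ∀ t ∈ Ici x, v₁ t - v₂ t ≤ 0 := by
    have hψanti : AntitoneOn
        (fun s => Real.exp (μ * s) * ((v₁' s - v₂' s) - μ * (v₁ s - v₂ s))) (Ici x) := by
      refine antiOn_of_hasDerivAt (convex_Ici x)
        (f' := fun t => Real.exp (μ * t) *
          (((v₁'' t - v₂'' t) - μ * (v₁' t - v₂' t)) + μ * ((v₁' t - v₂' t) - μ * (v₁ t - v₂ t))))
        (fun t ht => expMulDeriv (hz'd t (le_trans hx0 ht))) (fun t ht => ?_)
      rw [interior_Ici] at ht
      have htI : t ∈ Ici (0:ℝ) := le_trans hx0 (le_of_lt ht)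
      have hk := hkey t htI
      beta_reduce
      have heq2 : ((v₁'' t - v₂'' t) - μ * (v₁' t - v₂' t)) +
          μ * ((v₁' t - v₂' t) - μ * (v₁ t - v₂ t))
          = (v₁'' t - v₂'' t) - μ ^ 2 * (v₁ t - v₂ t) := by ring
      rw [heq2]
      exact mul_nonpos_iff.mpr (Or.inl ⟨(Real.exp_pos _).le, by linarith⟩)
    have hψle : ∀ t ∈ Ici x, (v₁' t - v₂' t) - μ * (v₁ t - v₂ t) ≤ 0 := by
      intro t ht
      have h1 := hψanti Set.self_mem_Ici ht (Set.mem_Ici.mp ht)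
      beta_reduce at h1
      have h2 : Real.exp (μ * x) * (v₁' x - v₂' x - μ * (v₁ x - v₂ x)) = 0 := by
        rw [hz'x, hzx]; ring
      rw [h2] at h1
      nlinarith [Real.exp_pos (μ * t)]
    have hφanti : AntitoneOn (fun s => Real.exp (-μ * s) * (v₁ s - v₂ s)) (Ici x) := by
      refine antiOn_of_hasDerivAt (convex_Ici x)
        (f' := fun t => Real.exp (-μ * t) * ((v₁' t - v₂' t) + -μ * (v₁ t - v₂ t)))
        (fun t ht => expMulDeriv ((hd₁ t (le_trans hx0 ht)).sub (hd₂ t (le_trans hx0 ht))))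
        (fun t ht => ?_)
      rw [interior_Ici] at ht
      have := hψle t (Set.mem_Ici.mpr (le_of_lt ht))
      exact mul_nonpos_iff.mpr (Or.inl ⟨(Real.exp_pos _).le, by linarith⟩)
    intro t ht
    have h1 := hφanti Set.self_mem_Ici ht (Set.mem_Ici.mp ht)
    beta_reduce at h1
    have h2 : Real.exp (-μ * x) * (v₁ x - v₂ x) = 0 := by rw [hzx, mul_zero]
    rw [h2] at h1
    nlinarith [Real.exp_pos (-μ * t)]
  -- backward: z ≤ 0 on [0, x]
  have hbw : ∀ t ∈ Icc (0:ℝ) x, v₁ t - v₂ t ≤ 0 := by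
    have hψanti : AntitoneOn
        (fun s => Real.exp (-μ * s) * ((v₁' s - v₂' s) + μ * (v₁ s - v₂ s))) (Icc 0 x) := by
      refine antiOn_of_hasDerivAt (convex_Icc _ _)
        (f' := fun t => Real.exp (-μ * t) *
          (((v₁'' t - v₂'' t) + μ * (v₁' t - v₂' t)) + -μ * ((v₁' t - v₂' t) + μ * (v₁ t - v₂ t))))
        (fun t ht => expMulDeriv (hz'd2 t ht.1)) (fun t ht => ?_)
      rw [interior_Icc] at ht
      have htI : t ∈ Ici (0:ℝ) := ht.1.le
      have hk := hkey t htI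
      beta_reduce
      have heq2 : ((v₁'' t - v₂'' t) + μ * (v₁' t - v₂' t)) +
          -μ * ((v₁' t - v₂' t) + μ * (v₁ t - v₂ t))
          = (v₁'' t - v₂'' t) - μ ^ 2 * (v₁ t - v₂ t) := by ring
      rw [heq2]
      exact mul_nonpos_iff.mpr (Or.inl ⟨(Real.exp_pos _).le, by linarith⟩)
    have hψge : ∀ t ∈ Icc (0:ℝ) x, 0 ≤ (v₁' t - v₂' t) + μ * (v₁ t - v₂ t) := by
      intro t ht
      have h1 := hψanti ht (Set.right_mem_Icc.mpr hx0) ht.2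
      beta_reduce at h1
      have h2 : Real.exp (-μ * x) * (v₁' x - v₂' x + μ * (v₁ x - v₂ x)) = 0 := by
        rw [hz'x, hzx]; ring
      rw [h2] at h1
      nlinarith [Real.exp_pos (-μ * t)]
    have hφmono : MonotoneOn (fun s => Real.exp (μ * s) * (v₁ s - v₂ s)) (Icc 0 x) := by
      refine monoOn_of_hasDerivAt (convex_Icc _ _)
        (f' := fun t => Real.exp (μ * t) * ((v₁' t - v₂' t) + μ * (v₁ t - v₂ t)))
        (fun t ht => expMulDeriv ((hd₁ t ht.1).sub (hd₂ t ht.1)))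
        (fun t ht => ?_)
      rw [interior_Icc] at ht
      have := hψge t ⟨ht.1.le, ht.2.le⟩
      exact mul_nonneg (Real.exp_pos _).le (by linarith)
    intro t ht
    have h1 := hφmono ht (Set.right_mem_Icc.mpr hx0) ht.2
    beta_reduce at h1
    have h2 : Real.exp (μ * x) * (v₁ x - v₂ x) = 0 := by rw [hzx, mul_zero]
    rw [h2] at h1
    nlinarith [Real.exp_pos (μ * t)]
  have hzero : ∀ t ∈ Ici (0:ℝ), v₁ t = v₂ t := by
    intro t ht
    rcases le_total t x with h | h
    · have h1 := hbw t ⟨ht, h⟩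
      have h2 := hz t ht
      linarith
    · have h1 := hfw t h
      have h2 := hz t ht
      linarith
  have hz'eq : ∀ t ∈ Ioi (0:ℝ), v₁' t = v₂' t := by
    intro t ht
    have heqf : v₁ =ᶠ[nhds t] v₂ :=
      Filter.eventuallyEq_of_mem (isOpen_Ioi.mem_nhds ht) (fun s hs => hzero s (Set.mem_Ici.mpr (le_of_lt hs)))
    have h1 : HasDerivAt v₂ (v₁' t) t := (hd₁ t (Set.mem_Ici.mpr (le_of_lt ht))).congr_of_eventuallyEq heqf.symm
    exact h1.unique (hd₂ t (Set.mem_Ici.mpr (le_of_lt ht)))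
  have hz''eq : ∀ t ∈ Ioi (0:ℝ), v₁'' t = v₂'' t := by
    intro t ht
    have heqf : v₁' =ᶠ[nhds t] v₂' :=
      Filter.eventuallyEq_of_mem (isOpen_Ioi.mem_nhds ht) (fun s hs => hz'eq s hs)
    have h1 : HasDerivAt v₂' (v₁'' t) t := (hd₁' t (Set.mem_Ici.mpr (le_of_lt ht))).congr_of_eventuallyEq heqf.symm
    exact h1.unique (hd₂' t (Set.mem_Ici.mpr (le_of_lt ht)))
  have hw : ∀ t ∈ Ioi (0:ℝ), w₁ t = w₂ t := by
    intro t ht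
    have e₁ := hode₁ t (Set.mem_Ici.mpr (le_of_lt ht))
    have e₂ := hode₂ t (Set.mem_Ici.mpr (le_of_lt ht))
    rw [hzero t (Set.mem_Ici.mpr (le_of_lt ht)), hz''eq t ht] at e₁
    linarith
  exact hdistinct (Filter.eventuallyEq_of_mem (self_mem_ae_restrict measurableSet_Ioi) hw)
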